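/- arXiv:1706.09061 — 3 statements merged into one kernel-verified Lean document; each statement's English description precedes it below -/
import Mathlib

section
/- For every natural number j ≥ 0, 2 · (2j+1)!! / (2j+4)!! ≤ 1 / ((j+2) · √(π(j+1))). -/
open Finset Real

private lemma P_sq_eq (j : ℕ) :
    (∏ i ∈ Finset.range (j + 1), ((2 * (i : ℝ) + 2) / (2 * i + 1))) ^ 2 =
      (2 * j + 3) * Real.Wallis.W (j + 1) := by
  induction j with
  | zero => simp [Real.Wallis.W]; norm_num
  | succ n ih =>
    rw [Finset.prod_range_succ, mul_pow, ih, Real.Wallis.W_succ (n + 1)]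
    have h1 : (2 * (n : ℝ) + 1) ≠ 0 := by positivity
    have h3 : (2 * (n : ℝ) + 3) ≠ 0 := by positivity
    have h5 : (2 * (n : ℝ) + 5) ≠ 0 := by positivity
    push_cast
    field_simp
    ring

private lemma pi_le_P_sq (j : ℕ) :
    Real.pi * ((j : ℝ) + 1) ≤
      (∏ i ∈ Finset.range (j + 1), ((2 * (i : ℝ) + 2) / (2 * i + 1))) ^ 2 := by
  rw [P_sq_eq]
  have h := Real.Wallis.le_W (j + 1)
  have hπ := Real.pi_pos
  push_cast at h
  have hd : (0:ℝ) < 2 * ((j:ℝ) + 1) + 2 := by positivity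
  rw [div_mul_eq_mul_div, div_le_iff₀ hd] at h
  nlinarith [h, hπ, Real.Wallis.W_pos (j + 1)]

theorem stmt_2 (j : ℕ) :
    2 * (∏ i ∈ Finset.range (j + 1), ((2 * i + 1 : ℕ) : ℝ)) /
        (∏ i ∈ Finset.range (j + 2), ((2 * (i + 1) : ℕ) : ℝ)) ≤
      1 / (((j : ℝ) + 2) * Real.sqrt (Real.pi * ((j : ℝ) + 1))) := by
  have hN : (∏ i ∈ Finset.range (j + 1), ((2 * i + 1 : ℕ) : ℝ)) =
      ∏ i ∈ Finset.range (j + 1), (2 * (i : ℝ) + 1) := by push_cast; rfl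
  have hE : (∏ i ∈ Finset.range (j + 2), ((2 * (i + 1) : ℕ) : ℝ)) =
      (∏ i ∈ Finset.range (j + 1), (2 * (i : ℝ) + 2)) * (2 * j + 4) := by
    have hc : ∀ i : ℕ, ((2 * (i + 1) : ℕ) : ℝ) = 2 * (i : ℝ) + 2 := by
      intro i; push_cast; ring
    simp_rw [hc]
    rw [Finset.prod_range_succ]
    push_cast; ring
  set N : ℝ := ∏ i ∈ Finset.range (j + 1), (2 * (i : ℝ) + 1) with hNdef
  set E : ℝ := ∏ i ∈ Finset.range (j + 1), (2 * (i : ℝ) + 2) with hEdef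
  have hNpos : 0 < N := Finset.prod_pos (fun i _ => by positivity)
  have hEpos : 0 < E := Finset.prod_pos (fun i _ => by positivity)
  have hP : (∏ i ∈ Finset.range (j + 1), ((2 * (i : ℝ) + 2) / (2 * i + 1))) = E / N := by
    rw [Finset.prod_div_distrib]
  have hsq : Real.pi * ((j : ℝ) + 1) ≤ (E / N) ^ 2 := by
    have := pi_le_P_sq j; rwa [hP] at this
  have hπj : (0 : ℝ) < Real.pi * ((j : ℝ) + 1) := by positivity
  have hsqrt : Real.sqrt (Real.pi * ((j : ℝ) + 1)) ≤ E / N := by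
    have := Real.sqrt_le_sqrt hsq
    rwa [Real.sqrt_sq (by positivity : (0:ℝ) ≤ E / N)] at this
  have hsqrtpos : 0 < Real.sqrt (Real.pi * ((j : ℝ) + 1)) := Real.sqrt_pos.2 hπj
  rw [hN, hE]
  rw [div_le_div_iff₀ (by positivity) (by positivity)]
  have key : N * Real.sqrt (Real.pi * ((j : ℝ) + 1)) ≤ E := by
    calc N * Real.sqrt (Real.pi * ((j : ℝ) + 1)) ≤ N * (E / N) := by gcongr
      _ = E := by field_simp
  nlinarith [hsqrtpos, hNpos, mul_le_mul_of_nonneg_left key (by positivity : (0:ℝ) ≤ 2 * ((j:ℝ)+2))]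
end

section
/- For every natural number j ≥ 1, (2j-1)!! / (2j)!! ≤ 1/√(π j). -/
open Finset Real

lemma aux_Q (j : ℕ) : (∏ i ∈ Finset.range j, ((2 * (i + 1) : ℕ) : ℝ)) = 2 ^ j * (j.factorial : ℝ) := by
  induction j with
  | zero => simp
  | succ n ih =>
    rw [Finset.prod_range_succ, ih, Nat.factorial_succ]
    push_cast
    ring

lemma aux_PQ (j : ℕ) : (∏ i ∈ Finset.range j, ((2 * i + 1 : ℕ) : ℝ)) *
    (∏ i ∈ Finset.range j, ((2 * (i + 1) : ℕ) : ℝ)) = ((2 * j).factorial : ℝ) := by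
  induction j with
  | zero => simp
  | succ n ih =>
    rw [Finset.prod_range_succ, Finset.prod_range_succ]
    have h : 2 * (n + 1) = (2 * n + 1) + 1 := by ring
    rw [h, Nat.factorial_succ, Nat.factorial_succ]
    push_cast at ih ⊢
    linear_combination (2 * (n:ℝ) + 1 + 1) * (2 * (n:ℝ) + 1) * ih

theorem stmt_3 (j : ℕ) (hj : 1 ≤ j) :
    (∏ i ∈ Finset.range j, ((2 * i + 1 : ℕ) : ℝ)) /
        (∏ i ∈ Finset.range j, ((2 * (i + 1) : ℕ) : ℝ)) ≤
      1 / Real.sqrt (Real.pi * (j : ℝ)) := by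
  set P := ∏ i ∈ Finset.range j, ((2 * i + 1 : ℕ) : ℝ) with hP
  set Q := ∏ i ∈ Finset.range j, ((2 * (i + 1) : ℕ) : ℝ) with hQdef
  have hPpos : 0 < P := Finset.prod_pos (by intro i _; positivity)
  have hQpos : 0 < Q := Finset.prod_pos (by intro i _; positivity)
  have hQ := aux_Q j
  have hPQ := aux_PQ j
  rw [← hQdef] at hQ
  rw [← hP, ← hQdef] at hPQ
  have hW := Real.Wallis.le_W j
  have hWeq := Real.Wallis.W_eq_factorial_ratio j
  -- W j = Q^2 / (P^2 * (2j+1))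
  have hfact : ((2 * j).factorial : ℝ) = P * Q := hPQ.symm
  have hWQ : Real.Wallis.W j = Q ^ 2 / (P ^ 2 * (2 * (j : ℝ) + 1)) := by
    rw [hWeq, hfact]
    have h24 : (2 : ℝ) ^ (4 * j) = (2 ^ j) ^ 4 := by rw [← pow_mul]; ring_nf
    have hQ4 : (2 : ℝ) ^ (4 * j) * (j.factorial : ℝ) ^ 4 = Q ^ 4 := by
      rw [h24, hQ]; ring
    rw [hQ4]
    rw [div_eq_div_iff (by positivity) (by positivity)]
    ring
  -- from le_W : (2j+1)/(2j+2) * (π/2) ≤ Q^2/(P^2 (2j+1))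
  rw [hWQ] at hW
  have hj1 : (1 : ℝ) ≤ (j : ℝ) := by exact_mod_cast hj
  have hpi := Real.pi_pos
  -- π * j ≤ (Q/P)^2
  have key : Real.pi * (j : ℝ) ≤ (Q / P) ^ 2 := by
    have h1 : ((2 : ℝ) * j + 1) / (2 * j + 2) * (Real.pi / 2) * (P ^ 2 * (2 * (j : ℝ) + 1)) ≤ Q ^ 2 :=
      (le_div_iff₀ (by positivity : (0:ℝ) < P ^ 2 * (2 * (j : ℝ) + 1))).mp hW
    have hd : (0:ℝ) < 2 * (j:ℝ) + 2 := by positivity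
    have h1' : (2 * (j:ℝ) + 1) * Real.pi * (P ^ 2 * (2 * (j : ℝ) + 1)) ≤ Q ^ 2 * ((2 * (j:ℝ) + 2) * 2) := by
      have h2 := mul_le_mul_of_nonneg_right h1 (le_of_lt (show (0:ℝ) < (2 * (j:ℝ) + 2) * 2 by positivity))
      calc (2 * (j:ℝ) + 1) * Real.pi * (P ^ 2 * (2 * (j : ℝ) + 1))
          = ((2 : ℝ) * j + 1) / (2 * j + 2) * (Real.pi / 2) * (P ^ 2 * (2 * (j : ℝ) + 1)) * ((2 * (j:ℝ) + 2) * 2) := by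
            field_simp
        _ ≤ Q ^ 2 * ((2 * (j:ℝ) + 2) * 2) := h2
    have h2 : (Q / P) ^ 2 = Q ^ 2 / P ^ 2 := by rw [div_pow]
    rw [h2, le_div_iff₀ (by positivity)]
    nlinarith [h1', mul_pos hpi (pow_pos hPpos 2)]
  have hsq : Real.sqrt (Real.pi * (j : ℝ)) ≤ Q / P := by
    have := Real.sqrt_le_sqrt key
    rwa [Real.sqrt_sq (by positivity : (0:ℝ) ≤ Q / P)] at this
  have hsqpos : 0 < Real.sqrt (Real.pi * (j : ℝ)) := Real.sqrt_pos.mpr (by positivity)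
  calc P / Q = 1 / (Q / P) := by rw [one_div_div]
    _ ≤ 1 / Real.sqrt (Real.pi * (j : ℝ)) := one_div_le_one_div_of_le hsqpos hsq
end

section
/- For s ∈ (0,1), α ≥ 0, β > -1, the sequence λ_n^{(0)} = Γ(n+α+1) Γ(n+β+s+1) / (Γ(n+α-s+1) Γ(n+β+1)) is strictly increasing in n ≥ 0. -/
open Real

theorem stmt_8 (s α β : ℝ) (hs0 : 0 < s) (hs1 : s < 1) (hα : 0 ≤ α) (hβ : -1 < β) :
    StrictMono (fun n : ℕ =>
      Real.Gamma (n + α + 1) * Real.Gamma (n + β + s + 1) /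
        (Real.Gamma (n + α - s + 1) * Real.Gamma (n + β + 1))) := by
  apply strictMono_nat_of_lt_succ
  intro n
  have hn : (0:ℝ) ≤ n := Nat.cast_nonneg n
  have h1 : (0:ℝ) < n + α + 1 := by linarith
  have h2 : (0:ℝ) < n + β + s + 1 := by linarith
  have h3 : (0:ℝ) < n + α - s + 1 := by linarith
  have h4 : (0:ℝ) < n + β + 1 := by linarith
  have g1 := Real.Gamma_pos_of_pos h1
  have g2 := Real.Gamma_pos_of_pos h2
  have g3 := Real.Gamma_pos_of_pos h3
  have g4 := Real.Gamma_pos_of_pos h4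
  push_cast
  have e1 : Real.Gamma ((n:ℝ) + 1 + α + 1) = (n + α + 1) * Real.Gamma (n + α + 1) := by
    rw [show (n:ℝ) + 1 + α + 1 = (n + α + 1) + 1 by ring, Real.Gamma_add_one h1.ne']
  have e2 : Real.Gamma ((n:ℝ) + 1 + β + s + 1) = (n + β + s + 1) * Real.Gamma (n + β + s + 1) := by
    rw [show (n:ℝ) + 1 + β + s + 1 = (n + β + s + 1) + 1 by ring, Real.Gamma_add_one h2.ne']
  have e3 : Real.Gamma ((n:ℝ) + 1 + α - s + 1) = (n + α - s + 1) * Real.Gamma (n + α - s + 1) := by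
    rw [show (n:ℝ) + 1 + α - s + 1 = (n + α - s + 1) + 1 by ring, Real.Gamma_add_one h3.ne']
  have e4 : Real.Gamma ((n:ℝ) + 1 + β + 1) = (n + β + 1) * Real.Gamma (n + β + 1) := by
    rw [show (n:ℝ) + 1 + β + 1 = (n + β + 1) + 1 by ring, Real.Gamma_add_one h4.ne']
  rw [e1, e2, e3, e4, div_lt_div_iff₀ (by positivity) (by positivity)]
  have key : (n + α - s + 1) * (n + β + 1) < (n + α + 1) * (n + β + s + 1) := by nlinarith
  nlinarith [mul_pos (mul_pos g1 g2) (mul_pos g3 g4), key,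
    mul_lt_mul_of_pos_right key (mul_pos (mul_pos g1 g2) (mul_pos g3 g4))]
end
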